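/- Let Ξ be an orthonormal basis of ℝ^n and S_{Ξ,0} := ∪_{ξ∈Ξ} { x ∈ 𝕊^{n-1} : x·ξ = 0 }. If 𝒳 is a finite family of orthonormal bases of ℝ^n with #𝒳 = n-1 and the intersection ∩_{Ξ∈𝒳} S_{Ξ,0} is infinite, then this intersection has Hausdorff dimension at least 1. -/

import Mathlib

open scoped RealInnerProductSpace

/-- For an orthonormal basis `Ξ` of `ℝⁿ`, `S_{Ξ,0}` is the set of unit vectors orthogonal
to at least one vector of `Ξ`. -/
def SXi0 (n : ℕ) (Ξ : OrthonormalBasis (Fin n) ℝ (EuclideanSpace ℝ (Fin n))) :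
    Set (EuclideanSpace ℝ (Fin n)) :=
  ⋃ i : Fin n, {x | ‖x‖ = 1 ∧ ⟪x, Ξ i⟫ = 0}

/-- If `𝒳` is a family of `n-1` orthonormal bases of `ℝⁿ` and `⋂_{Ξ∈𝒳} S_{Ξ,0}` is
infinite, then this intersection has Hausdorff dimension at least `1`. -/
theorem dimH_ge_one_of_infinite_inter (n : ℕ)
    (𝒳 : Fin (n - 1) → OrthonormalBasis (Fin n) ℝ (EuclideanSpace ℝ (Fin n)))
    (hinf : (⋂ j, SXi0 n (𝒳 j)).Infinite) :
    1 ≤ dimH (⋂ j, SXi0 n (𝒳 j)) := by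
  rcases Nat.lt_or_ge n 2 with hn | hn
  · interval_cases n
    · exact absurd (Set.toFinite _) hinf
    · haveI : IsEmpty (Fin (1 - 1)) := ⟨fun j => absurd j.2 (by omega)⟩
      have h : (⋂ j, SXi0 1 (𝒳 j)) = Set.univ := Set.iInter_of_empty _
      rw [h, Real.dimH_univ_eq_finrank]
      simp [finrank_euclideanSpace]
  · -- decompose the intersection of unions as a union of intersections
    have hdecomp : (⋂ j, SXi0 n (𝒳 j)) =
        ⋃ f : Fin (n - 1) → Fin n, ⋂ j,
          {x : EuclideanSpace ℝ (Fin n) | ‖x‖ = 1 ∧ ⟪x, 𝒳 j (f j)⟫ = 0} := by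
      simp only [SXi0]
      exact iInf_iSup_eq
    rw [hdecomp] at hinf ⊢
    obtain ⟨f, hf⟩ : ∃ f : Fin (n - 1) → Fin n,
        (⋂ j, {x : EuclideanSpace ℝ (Fin n) | ‖x‖ = 1 ∧ ⟪x, 𝒳 j (f j)⟫ = 0}).Infinite := by
      by_contra h
      push_neg at h
      exact hinf (Set.finite_iUnion h)
    set A : Set (EuclideanSpace ℝ (Fin n)) :=
      ⋂ j, {x : EuclideanSpace ℝ (Fin n) | ‖x‖ = 1 ∧ ⟪x, 𝒳 j (f j)⟫ = 0} with hA
    set V : Submodule ℝ (EuclideanSpace ℝ (Fin n)) :=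
      ⨅ j, (ℝ ∙ ((𝒳 j) (f j)))ᗮ with hVdef
    have hmemV : ∀ x : EuclideanSpace ℝ (Fin n),
        x ∈ V ↔ ∀ j, ⟪(𝒳 j) (f j), x⟫ = 0 := by
      intro x
      simp [hVdef, Submodule.mem_iInf,
        Submodule.mem_orthogonal_singleton_iff_inner_right]
    have hj0 : Nonempty (Fin (n - 1)) := ⟨⟨0, by omega⟩⟩
    obtain ⟨j0⟩ := hj0
    have hAV : ∀ x ∈ A, ‖x‖ = 1 ∧ x ∈ V := by
      intro x hx
      simp only [hA, Set.mem_iInter, Set.mem_setOf_eq] at hx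
      refine ⟨(hx j0).1, (hmemV x).2 fun j => ?_⟩
      rw [real_inner_comm]
      exact (hx j).2
    -- the subspace V has dimension at least 2
    have h2 : 2 ≤ Module.finrank ℝ V := by
      by_contra h
      push_neg at h
      have h1 : Module.finrank ℝ V ≤ 1 := by omega
      obtain ⟨v, hv⟩ := finrank_le_one_iff.mp h1
      apply hf
      refine ((Set.finite_singleton
          (-((‖(v : EuclideanSpace ℝ (Fin n))‖⁻¹) • (v : EuclideanSpace ℝ (Fin n))))).insert
          ((‖(v : EuclideanSpace ℝ (Fin n))‖⁻¹) • (v : EuclideanSpace ℝ (Fin n)))).subset ?_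
      intro x hx
      obtain ⟨hx1, hxV⟩ := hAV x hx
      obtain ⟨c, hc⟩ := hv ⟨x, hxV⟩
      have hxc : x = c • (v : EuclideanSpace ℝ (Fin n)) := by
        have := congrArg (Subtype.val) hc
        simpa using this.symm
      have hnv : ‖(v : EuclideanSpace ℝ (Fin n))‖ ≠ 0 := by
        intro h0
        rw [hxc] at hx1
        rw [norm_smul, h0, mul_zero] at hx1
        norm_num at hx1
      have habs : |c| = ‖(v : EuclideanSpace ℝ (Fin n))‖⁻¹ := by
        rw [hxc, norm_smul, Real.norm_eq_abs] at hx1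
        field_simp
        linarith [hx1]
      rcases abs_eq (by positivity : (0:ℝ) ≤ ‖(v : EuclideanSpace ℝ (Fin n))‖⁻¹) |>.mp habs with h' | h'
      · exact Set.mem_insert_iff.mpr (Or.inl (by rw [hxc, h']))
      · refine Set.mem_insert_iff.mpr (Or.inr ?_)
        rw [Set.mem_singleton_iff, hxc, h', neg_smul]
    -- choose an orthonormal pair in V
    haveI : FiniteDimensional ℝ V := inferInstance
    set b := stdOrthonormalBasis ℝ V with hb
    set i0 : Fin (Module.finrank ℝ V) := ⟨0, by omega⟩ with hi0
    set i1 : Fin (Module.finrank ℝ V) := ⟨1, by omega⟩ with hi1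
    set e1 : EuclideanSpace ℝ (Fin n) := (b i0 : EuclideanSpace ℝ (Fin n)) with he1def
    set e2 : EuclideanSpace ℝ (Fin n) := (b i1 : EuclideanSpace ℝ (Fin n)) with he2def
    have he1V : e1 ∈ V := (b i0).2
    have he2V : e2 ∈ V := (b i1).2
    have he1 : ‖e1‖ = 1 := by
      have := b.orthonormal.1 i0
      exact this
    have he2 : ‖e2‖ = 1 := by
      have := b.orthonormal.1 i1
      exact this
    have he12 : ⟪e1, e2⟫ = 0 := by
      have hne : i0 ≠ i1 := by
        simp only [hi0, hi1, ne_eq, Fin.mk.injEq]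
        norm_num
      have := b.orthonormal.2 hne
      simpa [he1def, he2def, Submodule.coe_inner] using this
    -- the circle through e1, e2
    set γ : ℝ → EuclideanSpace ℝ (Fin n) :=
      fun t => Real.cos t • e1 + Real.sin t • e2 with hγ
    have hγA : ∀ t, γ t ∈ A := by
      intro t
      simp only [hA, Set.mem_iInter, Set.mem_setOf_eq]
      intro j
      constructor
      · have hsq : ‖γ t‖ ^ 2 = 1 := by
          rw [hγ]
          rw [norm_add_sq_real, norm_smul, norm_smul, real_inner_smul_left,
            real_inner_smul_right, he12, he1, he2, Real.norm_eq_abs, Real.norm_eq_abs]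
          simp only [mul_one, mul_zero, add_zero, sq_abs]
          linarith [Real.sin_sq_add_cos_sq t]
        have : ‖γ t‖ = Real.sqrt (‖γ t‖ ^ 2) := (Real.sqrt_sq (norm_nonneg _)).symm
        rw [this, hsq, Real.sqrt_one]
      · have h1 : ⟪(𝒳 j) (f j), e1⟫ = 0 := (hmemV e1).1 he1V j
        have h2' : ⟪(𝒳 j) (f j), e2⟫ = 0 := (hmemV e2).1 he2V j
        rw [hγ]
        rw [real_inner_comm]
        simp only [inner_add_right, real_inner_smul_right, h1, h2', mul_zero, add_zero]
      -- end
    have key : Set.Icc (-1 : ℝ) 1 ⊆ (innerSL ℝ e1) '' (γ '' Set.Icc 0 Real.pi) := by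
      rintro y hy
      obtain ⟨t, ht, hty⟩ := Real.surjOn_cos hy
      refine ⟨γ t, ⟨t, ht, rfl⟩, ?_⟩
      simp only [innerSL_apply_apply, hγ]
      rw [inner_add_right, real_inner_smul_right, real_inner_smul_right,
        he12, real_inner_self_eq_norm_sq, he1]
      simpa using hty
    calc (1 : ENNReal) = dimH (Set.Icc (-1 : ℝ) 1) := by
          rw [Real.dimH_of_mem_nhds (Icc_mem_nhds (by norm_num) (by norm_num) :
            Set.Icc (-1 : ℝ) 1 ∈ nhds (0 : ℝ))]
          simp
      _ ≤ dimH ((innerSL ℝ e1) '' (γ '' Set.Icc 0 Real.pi)) := dimH_mono key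
      _ ≤ dimH (γ '' Set.Icc 0 Real.pi) := (innerSL ℝ e1).lipschitz.dimH_image_le _
      _ ≤ dimH A := dimH_mono (by rintro _ ⟨t, _, rfl⟩; exact hγA t)
      _ ≤ dimH (⋃ (f' : Fin (n - 1) → Fin n), ⋂ j,
            {x : EuclideanSpace ℝ (Fin n) | ‖x‖ = 1 ∧ ⟪x, 𝒳 j (f' j)⟫ = 0}) :=
          dimH_mono (Set.subset_iUnion
            (fun f' : Fin (n - 1) → Fin n => ⋂ j,
              {x : EuclideanSpace ℝ (Fin n) | ‖x‖ = 1 ∧ ⟪x, 𝒳 j (f' j)⟫ = 0}) f)
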